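/- arXiv:2105.08044 — 3 statements merged into one kernel-verified Lean document; each statement's English description precedes it below -/
import Mathlib

section
/- For α, β ∈ ℂ \ {0,1}, if (x,y,u,v) ∈ S_{α,β} and y ≠ 0, then u = x(x-1)(x-α)/y and v = (x-1)(x-α)(u-1)(u-β)/y; conversely, for any x ∈ ℂ and y ∈ ℂ \ {0}, these formulas define a point of S_{α,β}. Hence (x,y,u,v) ↦ (x,y) is a bijection from {(x,y,u,v) ∈ S_{α,β} : y ≠ 0} onto ℂ × (ℂ \ {0}). -/
open Complex

/-- The defining equations of the affine surface `S_{α,β} ⊆ ℂ⁴`. -/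
def Sab (α β x y u v : ℂ) : Prop :=
  y * u = x * (x - 1) * (x - α) ∧
  x * v = u * (u - 1) * (u - β) ∧
  y * v = (x - 1) * (x - α) * (u - 1) * (u - β)

/-- On `{y ≠ 0}`, points of `S_{α,β}` are uniquely determined by `(x,y)`:
`u` and `v` are given by the stated formulas, conversely these formulas always yield a
point of `S_{α,β}`, and the projection `(x,y,u,v) ↦ (x,y)` is a bijection from
`{(x,y,u,v) ∈ S_{α,β} : y ≠ 0}` onto `ℂ × (ℂ \ {0})`. -/
theorem stmt4 (α β : ℂ) (hα0 : α ≠ 0) (hα1 : α ≠ 1) (hβ0 : β ≠ 0) (hβ1 : β ≠ 1) :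
    (∀ x y u v : ℂ, Sab α β x y u v → y ≠ 0 →
        u = x * (x - 1) * (x - α) / y ∧ v = (x - 1) * (x - α) * (u - 1) * (u - β) / y) ∧
    (∀ x y : ℂ, y ≠ 0 →
        Sab α β x y (x * (x - 1) * (x - α) / y)
          ((x - 1) * (x - α) * (x * (x - 1) * (x - α) / y - 1) *
            (x * (x - 1) * (x - α) / y - β) / y)) ∧
    Set.BijOn (fun p : ℂ × ℂ × ℂ × ℂ => (p.1, p.2.1))
      {p : ℂ × ℂ × ℂ × ℂ | Sab α β p.1 p.2.1 p.2.2.1 p.2.2.2 ∧ p.2.1 ≠ 0}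
      ((Set.univ : Set ℂ) ×ˢ ({0}ᶜ : Set ℂ)) := by
  have fwd : ∀ x y u v : ℂ, Sab α β x y u v → y ≠ 0 →
      u = x * (x - 1) * (x - α) / y ∧ v = (x - 1) * (x - α) * (u - 1) * (u - β) / y := by
    rintro x y u v ⟨h1, h2, h3⟩ hy
    constructor
    · rw [eq_div_iff hy]; linear_combination h1
    · rw [eq_div_iff hy]; linear_combination h3
  have bwd : ∀ x y : ℂ, y ≠ 0 →
      Sab α β x y (x * (x - 1) * (x - α) / y)
        ((x - 1) * (x - α) * (x * (x - 1) * (x - α) / y - 1) *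
          (x * (x - 1) * (x - α) / y - β) / y) := by
    intro x y hy
    refine ⟨?_, ?_, ?_⟩ <;> field_simp <;> ring
  refine ⟨fwd, bwd, ?_, ?_, ?_⟩
  · rintro ⟨x, y, u, v⟩ ⟨hS, hy⟩
    exact ⟨trivial, hy⟩
  · rintro ⟨x, y, u, v⟩ ⟨hS, hy⟩ ⟨x', y', u', v'⟩ ⟨hS', hy'⟩ h
    simp only [Prod.mk.injEq] at h
    obtain ⟨hx, hyy⟩ := h
    subst hx; subst hyy
    obtain ⟨hu, hv⟩ := fwd x y u v hS hy
    obtain ⟨hu', hv'⟩ := fwd x y u' v' hS' hy'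
    have : u = u' := hu.trans hu'.symm
    subst this
    have : v = v' := hv.trans hv'.symm
    subst this
    rfl
  · rintro ⟨x, y⟩ ⟨-, hy⟩
    simp only [Set.mem_compl_iff, Set.mem_singleton_iff] at hy
    exact ⟨⟨x, y, x * (x - 1) * (x - α) / y,
      (x - 1) * (x - α) * (x * (x - 1) * (x - α) / y - 1) *
        (x * (x - 1) * (x - α) / y - β) / y⟩, ⟨bwd x y hy, hy⟩, rfl⟩
end

section
/- Under the real-linear change of coordinates (x,y,u,v) ↦ (X,Y,U,V) = (x+u, ix-iu, y+v, iy-iv), the defining equations of S_α (yu = x(x-1)(x-α), xv = u(u-1)(u-α), yv = (x-1)(x-α)(u-1)(u-α)) transform into a system of equations with real coefficients; in particular, for any (x,y,u,v) ∈ S_α one has 4(U² + V²) = (Y² + (X-2)²)(Y² + (X-2α)²), where (X,Y,U,V) = (x+u, ix-iu, y+v, iy-iv). -/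
open Complex

/-- The defining equations of the affine surface `S_α = S_{α,α} ⊆ ℂ⁴`. -/
def SA (α x y u v : ℂ) : Prop :=
  y * u = x * (x - 1) * (x - α) ∧
  x * v = u * (u - 1) * (u - α) ∧
  y * v = (x - 1) * (x - α) * (u - 1) * (u - α)

/-- In the real coordinates `(X,Y,U,V) = (x+u, ix-iu, y+v, iy-iv)`, every point of `S_α`
satisfies the real equation `4(U² + V²) = (Y² + (X-2)²)(Y² + (X-2α)²)`. -/
theorem stmt8 (α : ℂ) (hα0 : α ≠ 0) (hα1 : α ≠ 1)
    (x y u v : ℂ) (h : SA α x y u v) :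
    4 * ((y + v) ^ 2 + (I * y - I * v) ^ 2) =
      ((I * x - I * u) ^ 2 + (x + u - 2) ^ 2) *
        ((I * x - I * u) ^ 2 + (x + u - 2 * α) ^ 2) := by
  obtain ⟨h1, h2, h3⟩ := h
  have hI : I ^ 2 = -1 := I_sq
  linear_combination 16 * h3 + (4 * (y ^ 2 + v ^ 2) - (x - u) ^ 2 *
    ((x + u - 2) ^ 2 + (x + u - 2 * α) ^ 2) + (x - u) ^ 4) * hI
    + (-8*y*v + (4*x*u^3 - 6*x^2*u^2 + 4*x^3*u - x^4 - u^4) * I^2) * hI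
end

section
/- Let d, m₁, m₂, m₃, m₄, m₅ be natural numbers with d ≥ 1 satisfying: Σᵢmᵢ² ≥ d²+1 (negative self-intersection), Σᵢmᵢ(mᵢ−1) ≤ (d−1)(d−2) (nonnegative genus), 2d ≥ m₂+m₃+m₄+m₅ (intersection with a conic through four of the points), d ≥ m₁+m₂+m₃ and d ≥ m₁+m₄+m₅ (intersections with two lines). Then d = 1, m₁ = 0, m₂+m₃ ≤ 1, m₄+m₅ ≤ 1, and (m₂,m₃,m₄,m₅) ∈ {(1,0,1,0),(1,0,0,1),(0,1,0,1),(0,1,1,0)}. -/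
lemma sq_aux (m : ℕ) : m * (m - 1) + m = m ^ 2 := by
  cases m with
  | zero => rfl
  | succ n => simp [Nat.succ_sub_one, pow_two]; ring

lemma d_aux (d : ℕ) (hd : 1 ≤ d) : (d - 1) * (d - 2) + 3 * d = d ^ 2 + 2 := by
  obtain ⟨k, rfl⟩ : ∃ k, d = k + 1 := ⟨d - 1, by omega⟩
  cases k with
  | zero => rfl
  | succ n =>
    simp only [Nat.add_sub_cancel, pow_two]
    have : n + 1 + 1 - 2 = n := by omega
    rw [this]; ring

/-- Arithmetic core of the classification of negative curves on `Y_α`: under the stated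
inequalities, `d = 1`, `m₁ = 0`, `m₂+m₃ ≤ 1`, `m₄+m₅ ≤ 1`, and
`(m₂,m₃,m₄,m₅)` is one of `(1,0,1,0), (1,0,0,1), (0,1,0,1), (0,1,1,0)`. -/
theorem stmt12 (d m₁ m₂ m₃ m₄ m₅ : ℕ) (hd : 1 ≤ d)
    (hneg : d ^ 2 + 1 ≤ m₁ ^ 2 + m₂ ^ 2 + m₃ ^ 2 + m₄ ^ 2 + m₅ ^ 2)
    (hgenus : m₁ * (m₁ - 1) + m₂ * (m₂ - 1) + m₃ * (m₃ - 1) + m₄ * (m₄ - 1) + m₅ * (m₅ - 1)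
      ≤ (d - 1) * (d - 2))
    (hconic : m₂ + m₃ + m₄ + m₅ ≤ 2 * d)
    (hline1 : m₁ + m₂ + m₃ ≤ d)
    (hline2 : m₁ + m₄ + m₅ ≤ d) :
    d = 1 ∧ m₁ = 0 ∧ m₂ + m₃ ≤ 1 ∧ m₄ + m₅ ≤ 1 ∧
      ((m₂, m₃, m₄, m₅) = (1, 0, 1, 0) ∨ (m₂, m₃, m₄, m₅) = (1, 0, 0, 1) ∨
        (m₂, m₃, m₄, m₅) = (0, 1, 0, 1) ∨ (m₂, m₃, m₄, m₅) = (0, 1, 1, 0)) := by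
  have e1 := sq_aux m₁
  have e2 := sq_aux m₂
  have e3 := sq_aux m₃
  have e4 := sq_aux m₄
  have e5 := sq_aux m₅
  have hD := d_aux d hd
  have ed := sq_aux d
  -- first show d = 1
  have hd1 : d = 1 := by
    by_contra h
    have h2 : 2 ≤ d := by omega
    omega
  subst hd1
  -- genus forces all mᵢ ≤ 1
  have hle : ∀ m : ℕ, m * (m - 1) = 0 → m ≤ 1 := by
    intro m hm
    rcases Nat.mul_eq_zero.mp hm with h | h <;> omega
  have h1 : m₁ ≤ 1 := hle m₁ (by omega)
  have h2 : m₂ ≤ 1 := hle m₂ (by omega)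
  have h3 : m₃ ≤ 1 := hle m₃ (by omega)
  have h4 : m₄ ≤ 1 := hle m₄ (by omega)
  have h5 : m₅ ≤ 1 := hle m₅ (by omega)
  have s1 : m₁ ^ 2 = m₁ := by have : m₁ * (m₁ - 1) = 0 := by omega
                              omega
  have s2 : m₂ ^ 2 = m₂ := by have : m₂ * (m₂ - 1) = 0 := by omega
                              omega
  have s3 : m₃ ^ 2 = m₃ := by have : m₃ * (m₃ - 1) = 0 := by omega
                              omega
  have s4 : m₄ ^ 2 = m₄ := by have : m₄ * (m₄ - 1) = 0 := by omega
                              omega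
  have s5 : m₅ ^ 2 = m₅ := by have : m₅ * (m₅ - 1) = 0 := by omega
                              omega
  rw [s1, s2, s3, s4, s5] at hneg
  simp only [Prod.mk.injEq]
  exact ⟨trivial, by omega⟩
end
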